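/- arXiv:2501.15746 — 4 statements merged into one kernel-verified Lean document; each statement's English description precedes it below -/
import Mathlib

section
/- Let F be a field and r ≥ 2 an integer. Let A = (a_{ij}) be an invertible r×r matrix over F whose characteristic polynomial has r distinct roots in F. Suppose w ∈ F and z = (z_1, …, z_{r-1}) ∈ F^{r-1} satisfy A·(z_1, …, z_{r-1}, 1)^T = w·(z_1, …, z_{r-1}, 1)^T (note w ≠ 0 since A is invertible). Let J be the (r-1)×(r-1) matrix over F with entries J_{ij} = w^{-1}(a_{ij} − a_{rj} z_i) for 1 ≤ i, j ≤ r-1. Then the two subspaces Δ := {(x, x) : x ∈ F^{r-1}} and Γ_J := {(x, Jx) : x ∈ F^{r-1}} of F^{r-1} × F^{r-1} intersect trivially, i.e., Δ ∩ Γ_J = {0}. -/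
open Polynomial Matrix

lemma eval_charpoly' {F : Type*} [Field F] [DecidableEq F] {n : Type*} [Fintype n] [DecidableEq n]
    (M : Matrix n n F) (t : F) : M.charpoly.eval t = (t • (1 : Matrix n n F) - M).det := by
  rw [Matrix.charpoly, ← coe_evalRingHom, RingHom.map_det]
  congr 1
  ext i j
  by_cases h : i = j <;>
    simp [h, charmatrix_apply, Matrix.diagonal_apply, Matrix.one_apply, RingHom.mapMatrix_apply]

-- key factorization lemma
lemma charpoly_factor {F : Type*} [Field F] [DecidableEq F] (m : ℕ)
    (A : Matrix (Fin (m + 1)) (Fin (m + 1)) F)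
    (w : F) (hw : w ≠ 0) (z : Fin m → F)
    (heig : A.mulVec (Fin.snoc z 1 : Fin (m + 1) → F) = w • (Fin.snoc z 1 : Fin (m + 1) → F))
    (J : Matrix (Fin m) (Fin m) F)
    (hJ : ∀ i j : Fin m,
      J i j = w⁻¹ * (A i.castSucc j.castSucc - A (Fin.last m) j.castSucc * z i)) :
    A.charpoly = (w • J).charpoly * (X - C w) := by
  set e : Fin m ⊕ Fin 1 ≃ Fin (m + 1) := finSumFinEquiv
  have he1 : ∀ i : Fin m, e (Sum.inl i) = i.castSucc := fun i => rfl
  have he2 : ∀ j : Fin 1, e (Sum.inr j) = Fin.last m := by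
    intro j
    fin_cases j
    simp [e, finSumFinEquiv]
    rfl
  set P : Matrix (Fin m) (Fin m) F := fun i j => A i.castSucc j.castSucc with hP
  set Q : Matrix (Fin m) (Fin 1) F := fun i _ => A i.castSucc (Fin.last m) with hQ
  set R : Matrix (Fin 1) (Fin m) F := fun _ j => A (Fin.last m) j.castSucc with hR
  set S : Matrix (Fin 1) (Fin 1) F := fun _ _ => A (Fin.last m) (Fin.last m) with hS
  set zc : Matrix (Fin m) (Fin 1) F := fun i _ => z i with hzc
  have hA' : A.submatrix e e = fromBlocks P Q R S := by
    ext (i | i) (j | j) <;>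
      simp [Matrix.submatrix_apply, he1, he2, Matrix.fromBlocks, hP, hQ, hR, hS]
  set T : Matrix (Fin m ⊕ Fin 1) (Fin m ⊕ Fin 1) F := fromBlocks 1 zc 0 1 with hT
  set B : Matrix (Fin m ⊕ Fin 1) (Fin m ⊕ Fin 1) F :=
    fromBlocks (w • J) 0 R (w • 1) with hB
  -- eigen equation rows
  have heigc : ∀ i : Fin m, (∑ j : Fin m, A i.castSucc j.castSucc * z j)
      + A i.castSucc (Fin.last m) = w * z i := by
    intro i
    have := congrFun heig i.castSucc
    simpa [Matrix.mulVec, dotProduct, Fin.sum_univ_castSucc] using this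
  have heigl : (∑ j : Fin m, A (Fin.last m) j.castSucc * z j)
      + A (Fin.last m) (Fin.last m) = w := by
    have := congrFun heig (Fin.last m)
    simpa [Matrix.mulVec, dotProduct, Fin.sum_univ_castSucc] using this
  have h11 : P * (1 : Matrix (Fin m) (Fin m) F) + Q * (0 : Matrix (Fin 1) (Fin m) F)
      = (1 : Matrix (Fin m) (Fin m) F) * (w • J) + zc * R := by
    rw [Matrix.mul_one, Matrix.mul_zero, Matrix.one_mul, add_zero]
    ext i j
    have hJ' : w * J i j = A i.castSucc j.castSucc - A (Fin.last m) j.castSucc * z i := by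
      rw [hJ i j, ← mul_assoc, mul_inv_cancel₀ hw, one_mul]
    rw [Matrix.add_apply, Matrix.mul_apply]
    simp only [Matrix.add_apply, Matrix.smul_apply, Matrix.mul_apply, Fin.sum_univ_one,
      smul_eq_mul, hP, hzc, hR, hJ']
    ring
  have h12 : P * zc + Q * (1 : Matrix (Fin 1) (Fin 1) F)
      = (1 : Matrix (Fin m) (Fin m) F) * (0 : Matrix (Fin m) (Fin 1) F)
        + zc * (w • (1 : Matrix (Fin 1) (Fin 1) F)) := by
    rw [Matrix.mul_one, Matrix.one_mul]
    ext i j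
    fin_cases j
    simp only [Matrix.add_apply, Matrix.mul_apply]
    simpa [Matrix.mul_apply, Fin.sum_univ_one, Matrix.one_apply, mul_comm, hP, hQ, hzc]
      using heigc i
  have h21 : R * (1 : Matrix (Fin m) (Fin m) F) + S * (0 : Matrix (Fin 1) (Fin m) F)
      = (0 : Matrix (Fin 1) (Fin m) F) * (w • J) + (1 : Matrix (Fin 1) (Fin 1) F) * R := by
    rw [Matrix.mul_one, Matrix.mul_zero, Matrix.zero_mul, Matrix.one_mul, add_zero, zero_add]
  have h22 : R * zc + S * (1 : Matrix (Fin 1) (Fin 1) F)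
      = (0 : Matrix (Fin 1) (Fin m) F) * (0 : Matrix (Fin m) (Fin 1) F)
        + (1 : Matrix (Fin 1) (Fin 1) F) * (w • (1 : Matrix (Fin 1) (Fin 1) F)) := by
    rw [Matrix.mul_one, Matrix.zero_mul, Matrix.one_mul, zero_add]
    ext i j
    fin_cases i; fin_cases j
    simp only [Matrix.add_apply, Matrix.mul_apply]
    simpa [Matrix.mul_apply, Fin.sum_univ_one, Matrix.one_apply, mul_comm, hR, hS, hzc]
      using heigl
  have hmul : A.submatrix e e * T = T * B := by
    rw [hA', hT, hB, Matrix.fromBlocks_multiply, Matrix.fromBlocks_multiply,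
      h11, h12, h21, h22]
  -- similarity: same charpoly
  have hdetT : T.det = 1 := by
    rw [hT, Matrix.det_fromBlocks_zero₂₁, Matrix.det_one, Matrix.det_one, one_mul]
  have hcomm : Matrix.scalar (Fin m ⊕ Fin 1) (X : F[X]) * T.map C
      = T.map C * Matrix.scalar (Fin m ⊕ Fin 1) (X : F[X]) := by
    rw [Matrix.scalar_commute X (fun r => Commute.all X r) (T.map C)]
  have hmapmul : (C : F →+* F[X]).mapMatrix (A.submatrix e e) * T.map C
      = T.map C * (C : F →+* F[X]).mapMatrix B := by
    simp only [RingHom.mapMatrix_apply]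
    rw [← Matrix.map_mul, ← Matrix.map_mul, hmul]
  have key : charmatrix (A.submatrix e e) * T.map C = T.map C * charmatrix B := by
    rw [charmatrix, charmatrix, sub_mul, mul_sub, hcomm, hmapmul]
  have hcheq : (A.submatrix e e).charpoly = B.charpoly := by
    have hd := congrArg Matrix.det key
    rw [Matrix.det_mul, Matrix.det_mul] at hd
    have hTC : (T.map C).det = 1 := by
      rw [show T.map ⇑C = (C : F →+* F[X]).mapMatrix T from rfl, ← RingHom.map_det, hdetT, Polynomial.C_1]
    rw [hTC, mul_one, one_mul] at hd
    exact hd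
  have hreindex : (A.submatrix e e).charpoly = A.charpoly := by
    have := Matrix.charpoly_reindex (R := F) e.symm A
    rwa [Matrix.reindex_apply, Equiv.symm_symm] at this
  -- charpoly of B
  have hBch : B.charpoly = (w • J).charpoly * (X - C w) := by
    have hcm : charmatrix B = fromBlocks (charmatrix (w • J)) 0 (-(R.map C))
        (charmatrix (w • (1 : Matrix (Fin 1) (Fin 1) F))) := by
      rw [hB, charmatrix_fromBlocks]
      ext i j
      simp
    have h1 : (charmatrix (w • (1 : Matrix (Fin 1) (Fin 1) F))).det = X - C w := by
      rw [Matrix.det_fin_one, charmatrix_apply_eq]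
      congr 1
      simp [Matrix.smul_apply, Matrix.one_apply_eq]
    rw [Matrix.charpoly, hcm, Matrix.det_fromBlocks_zero₁₂, h1, Matrix.charpoly]
  rw [← hreindex, hcheq, hBch]



/-- Let `F` be a field and `r = m+1 ≥ 2`. Let `A` be an invertible
`r × r` matrix over `F` whose characteristic polynomial has `r` distinct roots in `F`.
If `w ∈ F` and `z ∈ F^{r-1}` satisfy `A·(z,1)ᵀ = w·(z,1)ᵀ`, and `J` is the
`(r-1)×(r-1)` matrix with `J i j = w⁻¹ (a_{ij} - a_{rj} z_i)`, then the diagonal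
`Δ = {(x,x)}` and the graph `Γ_J = {(x, Jx)}` intersect trivially in `F^{r-1} × F^{r-1}`. -/
theorem stmt0 {F : Type*} [Field F] [DecidableEq F] (m : ℕ) (hm : 1 ≤ m)
    (A : Matrix (Fin (m + 1)) (Fin (m + 1)) F) (hA : IsUnit A.det)
    (hroots : (Matrix.charpoly A).roots.toFinset.card = m + 1)
    (w : F) (z : Fin m → F)
    (heig : A.mulVec (Fin.snoc z 1 : Fin (m + 1) → F) = w • (Fin.snoc z 1 : Fin (m + 1) → F))
    (J : Matrix (Fin m) (Fin m) F)
    (hJ : ∀ i j : Fin m,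
      J i j = w⁻¹ * (A i.castSucc j.castSucc - A (Fin.last m) j.castSucc * z i)) :
    {p : (Fin m → F) × (Fin m → F) | p.2 = p.1} ∩
      {p : (Fin m → F) × (Fin m → F) | p.2 = J.mulVec p.1} = {0} := by
  have hAinj : Function.Injective A.mulVec :=
    Matrix.mulVec_injective_iff_isUnit.mpr ((Matrix.isUnit_iff_isUnit_det A).mpr hA)
  have hw : w ≠ 0 := by
    intro h0
    have h1 : A.mulVec (Fin.snoc z 1 : Fin (m + 1) → F) = A.mulVec 0 := by
      rw [heig, h0, zero_smul, Matrix.mulVec_zero]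
    have h2 := hAinj h1
    have h3 := congrFun h2 (Fin.last m)
    simp [Fin.snoc_last] at h3
  have hfac := charpoly_factor m A w hw z heig J hJ
  set p := A.charpoly with hp
  set g := (w • J).charpoly with hg
  have hpm : p.Monic := A.charpoly_monic
  have hpne : p ≠ 0 := hpm.ne_zero
  have hdeg : p.natDegree = m + 1 := by
    rw [hp, Matrix.charpoly_natDegree_eq_dim, Fintype.card_fin]
  -- roots are distinct
  have hcard1 : p.roots.toFinset.card ≤ Multiset.card p.roots := p.roots.toFinset_card_le
  have hcard2 : Multiset.card p.roots ≤ m + 1 := hdeg ▸ p.card_roots'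
  have hnodup : p.roots.Nodup := by
    refine Multiset.toFinset_card_eq_card_iff_nodup.mp ?_
    omega
  -- w is a root
  have hweval : p.eval w = 0 := by
    rw [hfac]
    simp
  have hwmem : w ∈ p.roots := by
    rw [Polynomial.mem_roots hpne]
    exact hweval
  have hmult1 : p.rootMultiplicity w ≤ 1 := by
    rw [← Polynomial.count_roots]
    exact (Multiset.nodup_iff_count_le_one.mp hnodup) w
  -- g.eval w ≠ 0
  have hgw : g.eval w ≠ 0 := by
    intro h0
    have hdvd : (X - C w) ∣ g := Polynomial.dvd_iff_isRoot.mpr h0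
    obtain ⟨h, hh⟩ := hdvd
    have hdvd2 : (X - C w) ^ 2 ∣ p := by
      rw [hfac, hh]
      ring_nf
      exact Dvd.intro h (by ring)
    have := (Polynomial.le_rootMultiplicity_iff hpne).mpr hdvd2
    omega
  -- compute g.eval w
  have hgev : g.eval w = w ^ m * (1 - J).det := by
    rw [hg, eval_charpoly', ← smul_sub, Matrix.det_smul, Fintype.card_fin]
  have hdetIJ : (1 - J).det ≠ 0 := by
    intro h0
    rw [hgev, h0, mul_zero] at hgw
    exact hgw rfl
  have hIJinj : Function.Injective (1 - J).mulVec :=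
    Matrix.mulVec_injective_iff_isUnit.mpr
      ((Matrix.isUnit_iff_isUnit_det _).mpr (isUnit_iff_ne_zero.mpr hdetIJ))
  -- conclude
  ext q
  simp only [Set.mem_inter_iff, Set.mem_setOf_eq, Set.mem_singleton_iff]
  constructor
  · rintro ⟨h1, h2⟩
    have hx : (1 - J).mulVec q.1 = (1 - J).mulVec 0 := by
      rw [Matrix.mulVec_zero, Matrix.sub_mulVec, Matrix.one_mulVec, ← h2, h1, sub_self]
    have hq1 : q.1 = 0 := hIJinj hx
    have hq2 : q.2 = 0 := by rw [h1, hq1]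
    exact Prod.ext hq1 hq2
  · rintro rfl
    exact ⟨rfl, by simp⟩
end

section
/- Let F be a field and r ≥ 2 an integer. Let A = (a_{ij}) be an r×r matrix over F whose characteristic polynomial has r distinct roots in F. Suppose w ∈ F and z = (z_1, …, z_{r-1}) ∈ F^{r-1} satisfy A·(z_1, …, z_{r-1}, 1)^T = w·(z_1, …, z_{r-1}, 1)^T. Then the (r-1)×(r-1) matrix M over F with entries M_{ij} = a_{ij} − z_i·a_{rj} − w·δ_{ij} (where δ_{ij} is the Kronecker delta) is invertible. -/
open Polynomial Matrix

/-- Charpoly is invariant under conjugation. -/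
lemma charpoly_conj_aux {n : Type*} [Fintype n] [DecidableEq n] {R : Type*} [CommRing R]
    (P Q A : Matrix n n R) (h : Q * P = 1) :
    (Q * A * P).charpoly = A.charpoly := by
  have hPC : (Q.map (C : R →+* R[X])) * (P.map C) = 1 := by
    rw [← Matrix.map_mul, h]
    exact Matrix.map_one _ (map_zero C) (map_one C)
  have key : charmatrix (Q * A * P) = Q.map C * charmatrix A * P.map C := by
    rw [charmatrix, charmatrix]
    have h1 : (C : R →+* R[X]).mapMatrix (Q * A * P)
        = Q.map C * (C : R →+* R[X]).mapMatrix A * P.map C := by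
      simp only [RingHom.mapMatrix_apply, Matrix.map_mul]
    rw [h1, Matrix.mul_sub, Matrix.sub_mul]
    congr 1
    symm
    calc Q.map C * (scalar n) X * P.map C
        = (scalar n) X * Q.map C * P.map C := by
          rw [(scalar_commute (n := n) X (fun r => Commute.all _ _) (Q.map C)).eq]
      _ = (scalar n) X * (Q.map C * P.map C) := by rw [Matrix.mul_assoc]
      _ = (scalar n) X := by rw [hPC, Matrix.mul_one]
  have : (Q * A * P).charpoly = (Q.map C).det * A.charpoly * (P.map C).det := by
    rw [Matrix.charpoly, key, Matrix.det_mul, Matrix.det_mul, Matrix.charpoly]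
  rw [this, mul_comm ((Q.map C).det), mul_assoc, ← Matrix.det_mul, hPC, Matrix.det_one, mul_one]

/-- Let `F` be a field and `r = m+1 ≥ 2`. Let `A` be an `r × r`
matrix over `F` whose characteristic polynomial has `r` distinct roots in `F`.
If `w ∈ F` and `z ∈ F^{r-1}` satisfy `A·(z,1)ᵀ = w·(z,1)ᵀ`, then the
`(r-1)×(r-1)` matrix `M` with `M i j = a_{ij} - z_i a_{rj} - w δ_{ij}` is invertible. -/
theorem stmt1 {F : Type*} [Field F] [DecidableEq F] (m : ℕ) (hm : 1 ≤ m)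
    (A : Matrix (Fin (m + 1)) (Fin (m + 1)) F)
    (hroots : (Matrix.charpoly A).roots.toFinset.card = m + 1)
    (w : F) (z : Fin m → F)
    (heig : A.mulVec (Fin.snoc z 1 : Fin (m + 1) → F) = w • (Fin.snoc z 1 : Fin (m + 1) → F))
    (M : Matrix (Fin m) (Fin m) F)
    (hM : ∀ i j : Fin m,
      M i j = A i.castSucc j.castSucc - z i * A (Fin.last m) j.castSucc -
        w * (if i = j then 1 else 0)) :
    IsUnit M.det := by
  classical
  set v : Fin (m+1) → F := Fin.snoc z 1 with hv
  set N : Matrix (Fin m) (Fin m) F :=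
    Matrix.of fun i j => A i.castSucc j.castSucc - z i * A (Fin.last m) j.castSucc with hNdef
  set P : Matrix (Fin (m+1)) (Fin (m+1)) F := (1 : Matrix _ _ F).updateCol (Fin.last m) v
    with hPdef
  set v' : Fin (m+1) → F := Fin.snoc (fun i => -z i) 1 with hv'
  set Q : Matrix (Fin (m+1)) (Fin (m+1)) F := (1 : Matrix _ _ F).updateCol (Fin.last m) v'
    with hQdef
  set D : Matrix (Fin 1) (Fin 1) F := Matrix.diagonal (fun _ => w) with hDdef
  set c : Matrix (Fin 1) (Fin m) F := Matrix.of fun _ j => A (Fin.last m) j.castSucc with hcdef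
  set e : Fin m ⊕ Fin 1 ≃ Fin (m+1) := finSumFinEquiv with hedef
  set B : Matrix (Fin (m+1)) (Fin (m+1)) F := Matrix.reindex e e (Matrix.fromBlocks N 0 c D)
    with hBdef
  -- basic entry facts
  have hPQ : P * Q = 1 := by
    ext i j
    rw [Matrix.mul_apply, Fin.sum_univ_castSucc]
    simp only [hPdef, hQdef, Matrix.updateCol_apply, Matrix.one_apply, hv, hv',
      Fin.snoc_castSucc, Fin.snoc_last]
    have hcsl : ∀ x : Fin m, (x.castSucc = Fin.last m) = False := fun x =>
      eq_false (Fin.castSucc_lt_last x).ne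
    simp only [hcsl, if_false, if_true]
    by_cases hj : j = Fin.last m
    · subst hj
      simp only [if_pos rfl, mul_one]
      refine Fin.lastCases ?_ (fun i' => ?_) i
      · simp only [Fin.snoc_last]
        have : ∀ x : Fin m, (Fin.last m = x.castSucc) = False := fun x =>
          eq_false (Fin.castSucc_lt_last x).ne'
        simp [this]
      · simp only [Fin.snoc_castSucc, Fin.castSucc_inj, if_neg (Fin.castSucc_lt_last i').ne]
        simp [ite_mul, Finset.sum_ite_eq]
    · obtain ⟨j', rfl⟩ := Fin.exists_castSucc_eq.mpr hj
      simp only [if_neg hj, mul_zero, add_zero, Fin.castSucc_inj]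
      simp [mul_ite, ite_mul, mul_one, mul_zero, one_mul, zero_mul, Finset.sum_ite_eq,
        Finset.sum_ite_eq']
      exact fun h => absurd h.symm hj
  have hQP : Q * P = 1 := mul_eq_one_comm.mp hPQ
  have hsymm1 : ∀ k : Fin m, e.symm k.castSucc = Sum.inl k := fun k =>
    finSumFinEquiv_symm_apply_castAdd k
  have hsymm2 : e.symm (Fin.last m) = Sum.inr 0 := finSumFinEquiv_symm_apply_natAdd 0
  have hB1 : ∀ (k j : Fin m), B k.castSucc j.castSucc = N k j := by
    intro k j
    simp [hBdef, Matrix.reindex_apply, Matrix.submatrix_apply, hsymm1]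
  have hB2 : ∀ k : Fin m, B k.castSucc (Fin.last m) = 0 := by
    intro k
    simp [hBdef, Matrix.reindex_apply, Matrix.submatrix_apply, hsymm1, hsymm2]
  have hB3 : ∀ j : Fin m, B (Fin.last m) j.castSucc = A (Fin.last m) j.castSucc := by
    intro j
    simp [hBdef, hcdef, Matrix.reindex_apply, Matrix.submatrix_apply, hsymm1, hsymm2]
  have hB4 : B (Fin.last m) (Fin.last m) = w := by
    simp [hBdef, hDdef, Matrix.reindex_apply, Matrix.submatrix_apply, hsymm2]
  have hAP : A * P = P * B := by
    ext i j
    rw [Matrix.mul_apply, Matrix.mul_apply]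
    by_cases hj : j = Fin.last m
    · subst hj
      have hL : ∑ k, A i k * P k (Fin.last m) = w * v i := by
        have := congrFun heig i
        simp only [Matrix.mulVec, dotProduct, Pi.smul_apply, smul_eq_mul] at this
        rw [← this]
        refine Finset.sum_congr rfl fun k _ => ?_
        simp [hPdef, Matrix.updateCol_apply]
      rw [hL, Fin.sum_univ_castSucc (n := m)]
      simp only [hB2, hB4, mul_zero, Finset.sum_const_zero, zero_add]
      simp [hPdef, Matrix.updateCol_apply, mul_comm]
    · obtain ⟨j', rfl⟩ := Fin.exists_castSucc_eq.mpr hj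
      have hL : ∑ k, A i k * P k j'.castSucc = A i j'.castSucc := by
        have : ∀ k : Fin (m+1), A i k * P k j'.castSucc
            = if k = j'.castSucc then A i k else 0 := by
          intro k
          simp only [hPdef, Matrix.updateCol_apply, if_neg hj, Matrix.one_apply]
          by_cases hk : k = j'.castSucc <;> simp [hk]
        simp [this, Finset.sum_ite_eq']
      rw [hL, Fin.sum_univ_castSucc (n := m)]
      simp only [hB1, hB3]
      refine (Fin.lastCases ?_ (fun i' => ?_) i)
      · have h1 : ∀ k : Fin m, P (Fin.last m) k.castSucc = 0 := by
          intro k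
          simp [hPdef, Matrix.updateCol_apply, if_neg (Fin.castSucc_lt_last k).ne,
            Matrix.one_apply, (Fin.castSucc_lt_last k).ne']
        have h2 : P (Fin.last m) (Fin.last m) = 1 := by
          simp [hPdef, Matrix.updateCol_apply, hv, Fin.snoc_last]
        simp [h1, h2]
      · have h1 : ∀ k : Fin m, P i'.castSucc k.castSucc = if i' = k then 1 else 0 := by
          intro k
          simp [hPdef, Matrix.updateCol_apply, if_neg (Fin.castSucc_lt_last k).ne,
            Matrix.one_apply, Fin.castSucc_inj]
        have h2 : P i'.castSucc (Fin.last m) = z i' := by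
          simp [hPdef, Matrix.updateCol_apply, hv, Fin.snoc_castSucc]
        simp only [h1, h2, ite_mul, one_mul, zero_mul, Finset.sum_ite_eq, Finset.mem_univ,
          if_pos]
        simp [hNdef, hM]
  have hB : B = Q * A * P := by
    calc B = (Q * P) * B := by rw [hQP, Matrix.one_mul]
    _ = Q * (A * P) := by rw [Matrix.mul_assoc, ← hAP]
    _ = Q * A * P := by rw [Matrix.mul_assoc]
  have hfact : A.charpoly = N.charpoly * (X - C w) := by
    have h1 : A.charpoly = B.charpoly := by
      rw [hB]
      exact (charpoly_conj_aux P Q A hQP).symm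
    rw [h1, hBdef, Matrix.charpoly_reindex, Matrix.charpoly_fromBlocks_zero₁₂]
    congr 1
    rw [Matrix.charpoly, Matrix.det_fin_one]
    simp [hDdef, charmatrix_apply_eq]
  have hevalne : (N.charpoly).eval w ≠ 0 := by
    have hpm : A.charpoly.Monic := Matrix.charpoly_monic A
    have hp0 : A.charpoly ≠ 0 := hpm.ne_zero
    have hdeg : A.charpoly.natDegree = m + 1 := by
      simp [A.charpoly_natDegree_eq_dim]
    have hcard : Multiset.card A.charpoly.roots = m + 1 := by
      have hle : Multiset.card A.charpoly.roots ≤ m + 1 := by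
        exact le_trans A.charpoly.card_roots' (le_of_eq hdeg)
      have hge : m + 1 ≤ Multiset.card A.charpoly.roots := by
        exact le_trans (le_of_eq hroots.symm) (Multiset.toFinset_card_le _)
      omega
    have hnodup : A.charpoly.roots.Nodup :=
      Multiset.toFinset_card_eq_card_iff_nodup.mp (by rw [hroots, hcard])
    intro hNe
    have hdvd : (X - C w) ∣ N.charpoly := dvd_iff_isRoot.mpr hNe
    obtain ⟨q, hq⟩ := hdvd
    have h2 : (X - C w) ^ 2 ∣ A.charpoly := ⟨q, by rw [hfact, hq]; ring⟩
    have h3 := (le_rootMultiplicity_iff hp0).mpr h2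
    rw [← count_roots] at h3
    have h4 := Multiset.nodup_iff_count_le_one.mp hnodup w
    omega
  have hdet : (N.charpoly).eval w = (-1) ^ m * M.det := by
    have h3 : N.charpoly.eval w = ((charmatrix N).map (Polynomial.eval w)).det := by
      have h := RingHom.map_det (evalRingHom w) (charmatrix N)
      simpa [Matrix.charpoly, coe_evalRingHom] using h
    have h4 : (charmatrix N).map (Polynomial.eval w) = -M := by
      ext i j
      by_cases hij : i = j
      · subst hij
        simp [charmatrix_apply_eq, hM, hNdef, Matrix.map_apply, Matrix.neg_apply]
      · simp [charmatrix_apply_ne _ _ _ hij, hM i j, hij, Matrix.map_apply, Matrix.neg_apply,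
          hNdef]
    rw [h3, h4, Matrix.det_neg]
    simp
  rw [hdet] at hevalne
  refine isUnit_iff_ne_zero.mpr fun h0 => hevalne ?_
  rw [h0, mul_zero]
end

section
/- Let k ⊆ F be a field extension, r ≥ 1 an integer, and A = (a_{ij}) an r×r matrix with entries in k. Let z_1, …, z_{r-1} ∈ F be algebraically independent over k, and suppose there exists c ∈ F with A·(z_1, …, z_{r-1}, 1)^T = c·(z_1, …, z_{r-1}, 1)^T. Then A is a scalar matrix: A = a_{rr}·I_r, and c = a_{rr} ∈ k. -/
open MvPolynomial in
/-- Let `k ⊆ F` be a field extension, `r = m+1 ≥ 1`, and `A` an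
`r × r` matrix over `k`. If `z_1, …, z_{r-1} ∈ F` are algebraically independent over `k`
and `A·(z,1)ᵀ = c·(z,1)ᵀ` over `F` for some `c ∈ F`, then `A` is the scalar matrix
`a_{rr}·I` and `c = a_{rr} ∈ k`. -/
theorem stmt3 {k F : Type*} [Field k] [Field F] [Algebra k F] (m : ℕ)
    (A : Matrix (Fin (m + 1)) (Fin (m + 1)) k) (z : Fin m → F)
    (hz : AlgebraicIndependent k z) (c : F)
    (heig : (A.map (algebraMap k F)).mulVec (Fin.snoc z 1 : Fin (m + 1) → F) = c • (Fin.snoc z 1 : Fin (m + 1) → F)) :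
    A = A (Fin.last m) (Fin.last m) • (1 : Matrix (Fin (m + 1)) (Fin (m + 1)) k) ∧
      c = algebraMap k F (A (Fin.last m) (Fin.last m)) := by
  have hrow : ∀ i : Fin (m+1),
      (∑ j : Fin m, algebraMap k F (A i j.castSucc) * z j) + algebraMap k F (A i (Fin.last m))
        = c * (Fin.snoc z 1 : Fin (m+1) → F) i := by
    intro i
    have := congrFun heig i
    simp only [Matrix.mulVec, dotProduct, Matrix.map_apply, Pi.smul_apply,
      smul_eq_mul] at this
    rw [Fin.sum_univ_castSucc] at this
    simpa [Fin.snoc_castSucc, Fin.snoc_last] using this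
  have hclast := hrow (Fin.last m)
  rw [Fin.snoc_last, mul_one] at hclast
  -- polynomial relation for each row i < m
  set P : Fin m → MvPolynomial (Fin m) k := fun i =>
    (∑ j : Fin m, C (A i.castSucc j.castSucc) * X j) + C (A i.castSucc (Fin.last m))
      - ((∑ j : Fin m, C (A (Fin.last m) j.castSucc) * X j) + C (A (Fin.last m) (Fin.last m))) * X i
    with hPdef
  have hP : ∀ i : Fin m, P i = 0 := by
    intro i
    apply hz
    rw [map_zero, hPdef]
    simp only [map_sub, map_add, map_mul, map_sum, aeval_C, aeval_X]
    rw [hclast, sub_eq_zero]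
    have := hrow i.castSucc
    rw [Fin.snoc_castSucc] at this
    exact this
  -- evaluate at single variable points
  have key : ∀ i j : Fin m,
      Polynomial.C (A i.castSucc j.castSucc) * Polynomial.X + Polynomial.C (A i.castSucc (Fin.last m))
        - ((Polynomial.C (A (Fin.last m) j.castSucc)) * Polynomial.X + Polynomial.C (A (Fin.last m) (Fin.last m)))
          * (if i = j then (Polynomial.X : Polynomial k) else 0) = 0 := by
    intro i j
    have h0 := congrArg (aeval (fun l : Fin m => if l = j then (Polynomial.X : Polynomial k) else 0)) (hP i)
    rw [hPdef, map_zero] at h0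
    simp only [map_sub, map_add, map_mul, map_sum, aeval_C, aeval_X] at h0
    simpa [mul_ite, mul_zero, Finset.sum_ite_eq', Polynomial.algebraMap_eq] using h0
  have hee : ∀ i j : Fin m, i ≠ j → A i.castSucc j.castSucc = 0 := by
    intro i j hij
    have h := key i j
    rw [if_neg hij, mul_zero, sub_zero] at h
    have h1 := congrArg (fun p => Polynomial.coeff p 1) h
    simpa using h1
  have hcol : ∀ i : Fin m, A i.castSucc (Fin.last m) = 0 := by
    intro i
    have h := key i i
    rw [if_pos rfl] at h
    have h0 := congrArg (fun p => Polynomial.coeff p 0) h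
    simpa using h0
  have hlr : ∀ j : Fin m, A (Fin.last m) j.castSucc = 0 := by
    intro j
    have h := key j j
    rw [if_pos rfl] at h
    have h2 := congrArg (fun p => Polynomial.coeff p 2) h
    simpa [add_mul, mul_assoc, Polynomial.coeff_X_pow] using h2
  have hdiag : ∀ i : Fin m, A i.castSucc i.castSucc = A (Fin.last m) (Fin.last m) := by
    intro i
    have h := key i i
    rw [if_pos rfl] at h
    have h1 := congrArg (fun p => Polynomial.coeff p 1) h
    simp [add_mul, mul_assoc, Polynomial.coeff_X_pow, sub_eq_zero] at h1
    simpa [sub_eq_zero] using h1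
  constructor
  · ext i j
    rw [Matrix.smul_apply, Matrix.one_apply]
    refine Fin.lastCases ?_ (fun i => ?_) i
    · refine Fin.lastCases ?_ (fun j => ?_) j
      · simp
      · simp [hlr j, (Fin.castSucc_lt_last j).ne']
    · refine Fin.lastCases ?_ (fun j => ?_) j
      · simp [hcol i, (Fin.castSucc_lt_last i).ne]
      · by_cases hij : i = j
        · subst hij; simp [hdiag i]
        · simp [hee i j hij, hij, fun h => hij (Fin.castSucc_injective m h)]
  · rw [← hclast]
    simp [hlr]
end

section
/- Let K ⊆ L be a field extension, r ≥ 1 an integer, and A an r×r matrix with entries in K whose characteristic polynomial is irreducible over K. Suppose v ∈ L^r is a nonzero vector and λ ∈ L satisfies A·v = λ·v (viewing A as a matrix over L). Then the coordinates v_1, …, v_r of v are linearly independent over K. -/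
open Polynomial Matrix


/-- Let `K ⊆ L` be a field extension, `r ≥ 1`, and `A` an `r × r`
matrix over `K` whose characteristic polynomial is irreducible over `K`. If `v ∈ L^r`
is a nonzero eigenvector of `A` (viewed over `L`) with eigenvalue `λ ∈ L`, then the
coordinates of `v` are linearly independent over `K`. -/
theorem stmt5 {K L : Type*} [Field K] [Field L] [Algebra K L] (r : ℕ) (hr : 1 ≤ r)
    (A : Matrix (Fin r) (Fin r) K) (hirr : Irreducible (Matrix.charpoly A))
    (v : Fin r → L) (hv : v ≠ 0) (lam : L)
    (heig : (A.map (algebraMap K L)).mulVec v = lam • v) :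
    LinearIndependent K v := by
  by_contra hli
  obtain ⟨c, hc0, i₀, hci⟩ := Fintype.not_linearIndependent_iff.1 hli
  -- the linear functional w ↦ ∑ w i • v i
  set φ : (Fin r → K) →ₗ[K] L :=
    { toFun := fun w => ∑ i, w i • v i
      map_add' := by intro x y; simp [add_smul, Finset.sum_add_distrib]
      map_smul' := by intro a x; simp [Finset.smul_sum, smul_smul] } with hφdef
  have hφc : φ c = 0 := hc0
  -- key step: φ (w ᵥ* A) = lam • φ w
  have key : ∀ w : Fin r → K, φ (w ᵥ* A) = lam • φ w := by
    intro w
    have hAv : ∀ i, ∑ j, algebraMap K L (A i j) * v j = lam * v i := by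
      intro i
      have := congrFun heig i
      simpa [Matrix.mulVec, dotProduct, Matrix.map_apply] using this
    calc φ (w ᵥ* A) = ∑ j, (∑ i, w i * A i j) • v j := rfl
      _ = ∑ j, ∑ i, (w i * A i j) • v j := by
          simp [Finset.sum_smul]
      _ = ∑ i, ∑ j, (w i * A i j) • v j := Finset.sum_comm
      _ = ∑ i, w i • (lam * v i) := by
          refine Finset.sum_congr rfl fun i _ => ?_
          rw [← hAv i, Finset.smul_sum]
          refine Finset.sum_congr rfl fun j _ => ?_
          rw [Algebra.smul_def, Algebra.smul_def, _root_.map_mul, mul_assoc]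
      _ = lam • φ w := by
          show (∑ i, w i • (lam • v i)) = lam • ∑ i, w i • v i
          rw [Finset.smul_sum]
          exact Finset.sum_congr rfl fun i _ => smul_comm _ _ _
  have keyk : ∀ (k : ℕ) (w : Fin r → K), φ (w ᵥ* (A ^ k)) = lam ^ k • φ w := by
    intro k
    induction k with
    | zero => intro w; simp [Matrix.vecMul_one]
    | succ n ih =>
        intro w
        rw [pow_succ, ← Matrix.vecMul_vecMul, key, ih, pow_succ, smul_smul, mul_comm]
  -- the family g k = c ᵥ* A^k
  set g : Fin r → (Fin r → K) := fun k => c ᵥ* (A ^ (k : ℕ)) with hgdef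
  have hgker : ∀ k, φ (g k) = 0 := by
    intro k; rw [hgdef]; simp only [keyk, hφc, smul_zero]
  -- the linear map M ↦ c ᵥ* M
  set μ : Matrix (Fin r) (Fin r) K →ₗ[K] (Fin r → K) :=
    { toFun := fun M => c ᵥ* M
      map_add' := fun M N => Matrix.vecMul_add M N c
      map_smul' := by
        intro a M
        ext j
        simp [Matrix.vecMul, dotProduct, Finset.mul_sum, mul_left_comm] } with hμdef
  have hdeg : (Matrix.charpoly A).degree = (r : ℕ) := by
    simpa using Matrix.charpoly_degree_eq_dim A
  have hcp : μ (Polynomial.aeval A (Matrix.charpoly A)) = 0 := by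
    rw [Matrix.aeval_self_charpoly, map_zero]
  -- g is linearly independent
  have hgli : LinearIndependent K g := by
    rw [Fintype.linearIndependent_iff]
    intro d hd
    by_contra hdne
    push_neg at hdne
    obtain ⟨k₀, hk₀⟩ := hdne
    set q : K[X] := ∑ k : Fin r, d k • X ^ (k : ℕ) with hqdef
    have hq0 : q ≠ 0 := by
      intro h
      apply hk₀
      have := congrArg (fun p => p.coeff (k₀ : ℕ)) h
      simp only [hqdef, Polynomial.finset_sum_coeff, Polynomial.coeff_smul,
        Polynomial.coeff_X_pow, Polynomial.coeff_zero, smul_eq_mul] at this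
      rw [Finset.sum_eq_single k₀] at this
      · simpa using this
      · intro b _ hb
        have hne : ¬((k₀ : ℕ) = (b : ℕ)) := fun h => hb (Fin.ext h.symm)
        simp [hne]
      · simp
    have hqdeg : q.degree < (r : ℕ) := by
      apply lt_of_le_of_lt (Polynomial.degree_sum_le _ _)
      rw [Finset.sup_lt_iff (by exact_mod_cast WithBot.bot_lt_coe r)]
      intro k _
      apply lt_of_le_of_lt (Polynomial.degree_smul_le _ _)
      rw [Polynomial.degree_X_pow]
      exact_mod_cast k.2
    have hqval : μ (Polynomial.aeval A q) = 0 := by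
      have h2 : ∀ k : Fin r, μ (Polynomial.aeval A ((d k • X ^ (k : ℕ) : K[X]))) = d k • g k := by
        intro k
        rw [_root_.map_smul, Polynomial.aeval_X_pow, _root_.map_smul]; rfl
      rw [hqdef]
      simp only [map_sum, h2]
      exact hd
    -- coprimality gives c = 0
    have hndvd : ¬ Matrix.charpoly A ∣ q := by
      intro hdvd
      have := Polynomial.degree_le_of_dvd hdvd hq0
      rw [hdeg] at this
      exact absurd (lt_of_le_of_lt this hqdeg) (lt_irrefl _)
    obtain ⟨a, b, hab⟩ := (hirr.coprime_iff_not_dvd).2 hndvd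
    have habc : Matrix.charpoly A * a + q * b = 1 := by
      rw [mul_comm (Matrix.charpoly A) a, mul_comm q b]; exact hab
    have : c = 0 := by
      have h1 := congrArg (fun p => μ (Polynomial.aeval A p)) habc
      simp only [_root_.map_add, _root_.map_mul, _root_.map_one] at h1
      have hμmul : ∀ M N : Matrix (Fin r) (Fin r) K, μ (M * N) = (μ M) ᵥ* N :=
        fun M N => (Matrix.vecMul_vecMul c M N).symm
      have hone : μ 1 = c := Matrix.vecMul_one c
      rw [hμmul, hμmul, hcp, hqval, Matrix.zero_vecMul, Matrix.zero_vecMul, add_zero,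
        hone] at h1
      exact h1.symm
    rw [this] at hci
    exact hci rfl
  -- span of g is everything
  have hspan : Submodule.span K (Set.range g) = ⊤ := by
    haveI : Nonempty (Fin r) := ⟨⟨0, hr⟩⟩
    exact hgli.span_eq_top_of_card_eq_finrank (by simp)
  have hφ0 : φ = 0 := by
    apply LinearMap.ext
    intro w
    have hw : w ∈ Submodule.span K (Set.range g) := hspan ▸ Submodule.mem_top
    have hle : Submodule.span K (Set.range g) ≤ LinearMap.ker φ := by
      rw [Submodule.span_le]
      rintro _ ⟨k, rfl⟩
      exact hgker k
    simpa using hle hw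
  apply hv
  funext i
  have hsingle : φ (Pi.single i (1 : K)) = v i := by
    simp only [hφdef, LinearMap.coe_mk, AddHom.coe_mk]
    rw [Finset.sum_eq_single i] <;> simp +contextual [Pi.single_apply]
  rw [← hsingle, hφ0]
  rfl
end
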